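/- Consider the high-dimensional MA(∞) process e_t = Σ_{j=0}^∞ B_j ε_{t−j}, where the B_j are N×N matrices with |B_j|_2 = O(j^{−α_e}) for some α_e > 2, and {ε_{it}} are independent over i and t with E ε_{it} = 0 and E|ε_{it}|^q < ∞ for some q > 2. Then the functional dependence measure of the cross-sectional average satisfies δ_q(e,k) := ‖ (1/√N) Σ_{i=1}^N (e_{ik} − e*_{ik}) ‖_q = O(k^{−α_e}), where e*_t denotes the coupled process in which the innovation vector ε_0 is replaced by an independent copy ε*_0. -/

import Mathlib

open MeasureTheory ProbabilityTheory Filter Finset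
open scoped BigOperators ENNReal NNReal Topology Classical

noncomputable section

namespace GPY

variable {Ω : Type*} [MeasurableSpace Ω] {E : Type*} [MeasurableSpace E]

/-- The `L^q` norm `(E |X|^q)^{1/q}` of a real random variable. -/
def lqNorm (P : Measure Ω) (q : ℝ) (X : Ω → ℝ) : ℝ :=
  (∫ ω, |X ω| ^ q ∂P) ^ (1 / q)

/-- The trajectory `F_t = (ε_t, ε_{t-1}, …)` of the innovation process. -/
def traj (ε : ℤ → Ω → E) (t : ℤ) (ω : Ω) : ℕ → E := fun n => ε (t - (n : ℤ)) ω

/-- The coupled trajectory `F*_t`, in which the innovation `ε_0` is replaced by the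
independent copy `εs`. -/
def trajStar (ε : ℤ → Ω → E) (εs : Ω → E) (t : ℤ) (ω : Ω) : ℕ → E :=
  fun n => if t - (n : ℤ) = 0 then εs ω else ε (t - (n : ℤ)) ω

/-- The innovations `ε` (indexed by `ℤ`) together with the independent copy `εs`
form an i.i.d. family. -/
structure IIDInnovations (P : Measure Ω) (ε : ℤ → Ω → E) (εs : Ω → E) : Prop where
  meas : ∀ k, Measurable (ε k)
  measStar : Measurable εs
  indep : iIndepFun (Sum.elim ε fun _ : Unit => εs) P
  ident : ∀ k : ℤ ⊕ Unit, IdentDistrib (Sum.elim ε (fun _ => εs) k) (ε 0) P P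

/-- Cross-sectionally averaged process `ū_t = N^{-1/2} Σ_i u_i(F_t)`. -/
def ubar (ε : ℤ → Ω → E) {N : ℕ} (u : Fin N → (ℕ → E) → ℝ) (t : ℤ) (ω : Ω) : ℝ :=
  (Real.sqrt N)⁻¹ * ∑ i, u i (traj ε t ω)

/-- The functional dependence measure
`δ_q(u, t) = ‖ N^{-1/2} Σ_i (u_i(F_t) - u_i(F*_t)) ‖_q`. -/
def fdm (P : Measure Ω) (ε : ℤ → Ω → E) (εs : Ω → E) (q : ℝ)
    {N : ℕ} (u : Fin N → (ℕ → E) → ℝ) (t : ℕ) : ℝ :=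
  lqNorm P q fun ω =>
    (Real.sqrt N)⁻¹ * ∑ i, (u i (traj ε (t : ℤ) ω) - u i (trajStar ε εs (t : ℤ) ω))

/-- Tail sum `Δ_q(u, m) = Σ_{k ≥ m} δ_q(u, k)`. -/
def fdmTail (P : Measure Ω) (ε : ℤ → Ω → E) (εs : Ω → E) (q : ℝ)
    {N : ℕ} (u : Fin N → (ℕ → E) → ℝ) (m : ℕ) : ℝ :=
  ∑' k : ℕ, fdm P ε εs q u (m + k)

section LinearAlgebra

variable {ι κ : Type*} [Fintype ι] [Fintype κ]

/-- `ℓ1` norm of a vector. -/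
def l1norm (v : ι → ℝ) : ℝ := ∑ i, |v i|

/-- Euclidean norm of a vector. -/
def l2norm (v : ι → ℝ) : ℝ := Real.sqrt (∑ i, v i ^ 2)

/-- Euclidean inner product. -/
def dotp (v w : ι → ℝ) : ℝ := ∑ i, v i * w i

/-- Spectral (operator `ℓ2`) norm of a matrix. -/
def specNorm (A : Matrix ι κ ℝ) : ℝ :=
  sSup {r : ℝ | ∃ v : κ → ℝ, l2norm v = 1 ∧ r = l2norm (A.mulVec v)}

/-- Smallest singular value of a matrix. -/
def minSingular (A : Matrix ι κ ℝ) : ℝ :=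
  sInf {r : ℝ | ∃ v : κ → ℝ, l2norm v = 1 ∧ r = l2norm (A.mulVec v)}

/-- Frobenius norm of a matrix. -/
def frobNorm (A : Matrix ι κ ℝ) : ℝ := Real.sqrt (∑ i, ∑ j, A i j ^ 2)

/-- Entrywise max norm of a matrix. -/
def maxNorm (A : Matrix ι κ ℝ) : ℝ := ⨆ i, ⨆ j, |A i j|

/-- `k`-th largest entry (0-indexed: `k = 0` is the largest) of a finite family of reals. -/
def kthLargest (v : ι → ℝ) (k : ℕ) : ℝ :=
  sSup {r : ℝ | k + 1 ≤ (Finset.univ.filter fun i => r ≤ v i).card}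

/-- `k`-th largest singular value (0-indexed) of a matrix. -/
def singVal [DecidableEq κ] (A : Matrix ι κ ℝ) (k : ℕ) : ℝ :=
  kthLargest (fun i => Real.sqrt ((show (A.transpose * A).IsHermitian by simpa using Matrix.isHermitian_conjTranspose_mul_self A).eigenvalues i)) k

/-- Nuclear norm of a matrix: the sum of its singular values. -/
def nuclearNorm [DecidableEq κ] (A : Matrix ι κ ℝ) : ℝ :=
  ∑ i, Real.sqrt ((show (A.transpose * A).IsHermitian by simpa using Matrix.isHermitian_conjTranspose_mul_self A).eigenvalues i)

end LinearAlgebra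

/-- `X_n = O_P(a_n)` along a filter `l`. -/
def IsBigOP {α : Type*} (l : Filter α) (P : Measure Ω) (X : α → Ω → ℝ) (a : α → ℝ) : Prop :=
  ∀ δ : ℝ, 0 < δ → ∃ M : ℝ, 0 < M ∧ ∀ᶠ n in l, (P {ω | M * |a n| < |X n ω|}).toReal < δ

/-- Convergence in probability to a constant. -/
def TendstoInProb {α : Type*} (l : Filter α) (P : Measure Ω) (X : α → Ω → ℝ) (c : ℝ) : Prop :=
  ∀ δ : ℝ, 0 < δ → Tendsto (fun n => (P {ω | δ ≤ |X n ω - c|}).toReal) l (𝓝 0)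

/-- Convergence in distribution to a Gaussian law, expressed through the
pointwise convergence of distribution functions. -/
def TendstoGaussian {α : Type*} (l : Filter α) (P : Measure Ω) (Z : α → Ω → ℝ)
    (m : ℝ) (v : ℝ≥0) : Prop :=
  ∀ x : ℝ, Tendsto (fun n => (P {ω | Z n ω ≤ x}).toReal) l
    (𝓝 ((gaussianReal m v (Set.Iic x)).toReal))

end GPY
open GPY


namespace GPYAux

open GPY

lemma meas_rpow (q : ℝ) : Measurable fun x : ℝ => x ^ q := by fun_prop

lemma rpow_add_le {a b q : ℝ} (ha : 0 ≤ a) (hb : 0 ≤ b) (hq : 0 ≤ q) :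
    (a + b) ^ q ≤ 2 ^ q * (a ^ q + b ^ q) := by
  have h1 : a + b ≤ 2 * max a b := by
    rcases le_total a b with h | h
    · rw [max_eq_right h]; linarith
    · rw [max_eq_left h]; linarith
  have hmax : (0:ℝ) ≤ max a b := le_max_of_le_left ha
  calc (a + b) ^ q ≤ (2 * max a b) ^ q :=
        Real.rpow_le_rpow (by linarith) h1 hq
    _ = 2 ^ q * (max a b) ^ q := Real.mul_rpow (by norm_num) hmax
    _ ≤ 2 ^ q * (a ^ q + b ^ q) := by
        apply mul_le_mul_of_nonneg_left _ (Real.rpow_nonneg (by norm_num) q)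
        rcases le_total a b with h | h
        · rw [max_eq_right h]
          exact le_add_of_nonneg_left (Real.rpow_nonneg ha q)
        · rw [max_eq_left h]
          exact le_add_of_nonneg_right (Real.rpow_nonneg hb q)

lemma abs_rpow_le {x y q : ℝ} (hq : 0 ≤ q) :
    |x| ^ q ≤ 2 ^ q * (|x + y| ^ q + |y| ^ q) := by
  have h1 : |x| ≤ |x + y| + |y| := by
    calc |x| = |x + y + -y| := by ring_nf
      _ ≤ |x + y| + |(-y)| := abs_add_le _ _
      _ = |x + y| + |y| := by rw [abs_neg]
  calc |x| ^ q ≤ (|x + y| + |y|) ^ q :=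
        Real.rpow_le_rpow (abs_nonneg _) h1 hq
    _ ≤ 2 ^ q * (|x + y| ^ q + |y| ^ q) :=
        rpow_add_le (abs_nonneg _) (abs_nonneg _) hq

lemma sum_rpow_le {ι : Type*} (u : Finset ι) (a : ι → ℝ) (ha : ∀ i ∈ u, 0 ≤ a i)
    {q : ℝ} (hq : 0 < q) (N : ℕ) (hcard : u.card ≤ N) :
    (∑ i ∈ u, a i) ^ q ≤ (N : ℝ) ^ q * ∑ i ∈ u, a i ^ q := by
  rcases u.eq_empty_or_nonempty with rfl | hne
  · simp [Real.zero_rpow hq.ne']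
  · obtain ⟨m, hm, hmax⟩ := u.exists_max_image a hne
    have ham : 0 ≤ a m := ha m hm
    have h1 : ∑ i ∈ u, a i ≤ (N : ℝ) * a m := by
      calc ∑ i ∈ u, a i ≤ ∑ _i ∈ u, a m := Finset.sum_le_sum hmax
        _ = (u.card : ℝ) * a m := by rw [Finset.sum_const, nsmul_eq_mul]
        _ ≤ (N : ℝ) * a m := by
            apply mul_le_mul_of_nonneg_right _ ham
            exact_mod_cast hcard
    calc (∑ i ∈ u, a i) ^ q ≤ ((N : ℝ) * a m) ^ q :=
          Real.rpow_le_rpow (Finset.sum_nonneg ha) h1 hq.le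
      _ = (N : ℝ) ^ q * a m ^ q := Real.mul_rpow (Nat.cast_nonneg N) ham
      _ ≤ (N : ℝ) ^ q * ∑ i ∈ u, a i ^ q := by
          apply mul_le_mul_of_nonneg_left _ (Real.rpow_nonneg (Nat.cast_nonneg N) q)
          exact Finset.single_le_sum (fun i hi => Real.rpow_nonneg (ha i hi) q) hm

lemma summable_iff_nat_bound {ι : Type*} (g : ι → ℝ) :
    Summable g ↔ ∃ M : ℕ, ∀ u : Finset ι, ∑ j ∈ u, |g j| ≤ (M : ℝ) := by
  constructor
  · intro hs
    obtain ⟨M, hM⟩ := exists_nat_ge (∑' j, |g j|)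
    exact ⟨M, fun u => le_trans (Summable.sum_le_tsum u (fun i _ => abs_nonneg _) hs.abs) hM⟩
  · rintro ⟨M, hM⟩
    exact summable_abs_iff.mp (summable_of_sum_le (fun j => abs_nonneg (g j)) hM)

lemma l2norm_le_sum_abs {n : ℕ} (w : Fin n → ℝ) : l2norm w ≤ ∑ i, |w i| := by
  rw [l2norm]
  have h : ∑ i, w i ^ 2 ≤ (∑ i, |w i|) ^ 2 := by
    rw [sq (∑ i, |w i|), Finset.sum_mul]
    apply Finset.sum_le_sum
    intro i _
    calc w i ^ 2 = |w i| * |w i| := by rw [← sq_abs, sq]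
      _ ≤ |w i| * (∑ j, |w j|) :=
          mul_le_mul_of_nonneg_left
            (Finset.single_le_sum (fun j _ => abs_nonneg (w j)) (Finset.mem_univ i))
            (abs_nonneg _)
  calc Real.sqrt (∑ i, w i ^ 2) ≤ Real.sqrt ((∑ i, |w i|) ^ 2) := Real.sqrt_le_sqrt h
    _ = abs (∑ i, |w i|) := Real.sqrt_sq_eq_abs _
    _ = ∑ i, |w i| := abs_of_nonneg (Finset.sum_nonneg fun i _ => abs_nonneg _)

lemma abs_apply_le_l2norm {n : ℕ} (w : Fin n → ℝ) (i : Fin n) : |w i| ≤ l2norm w := by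
  rw [l2norm, ← Real.sqrt_sq_eq_abs]
  exact Real.sqrt_le_sqrt (Finset.single_le_sum (fun j _ => sq_nonneg (w j)) (Finset.mem_univ i))

lemma bddAbove_specSet {N : ℕ} (A : Matrix (Fin N) (Fin N) ℝ) :
    BddAbove {r : ℝ | ∃ v : Fin N → ℝ, l2norm v = 1 ∧ r = l2norm (A.mulVec v)} := by
  refine ⟨∑ i, ∑ j, |A i j|, ?_⟩
  rintro r ⟨v, hv, rfl⟩
  have hv2 : ∑ j, v j ^ 2 = 1 := by
    have h0 : (0:ℝ) ≤ ∑ j, v j ^ 2 := Finset.sum_nonneg fun j _ => sq_nonneg _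
    have := hv
    rw [l2norm] at this
    nlinarith [Real.sq_sqrt h0, Real.sqrt_nonneg (∑ j, v j ^ 2)]
  have hvj : ∀ j, |v j| ≤ 1 := by
    intro j
    have h1 : v j ^ 2 ≤ 1 := by
      rw [← hv2]
      exact Finset.single_le_sum (fun j _ => sq_nonneg (v j)) (Finset.mem_univ j)
    nlinarith [abs_nonneg (v j), sq_abs (v j)]
  calc l2norm (A.mulVec v) ≤ ∑ i, |A.mulVec v i| := l2norm_le_sum_abs _
    _ ≤ ∑ i, ∑ j, |A i j| := by
        apply Finset.sum_le_sum
        intro i _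
        calc |A.mulVec v i| = |∑ j, A i j * v j| := by
              rw [Matrix.mulVec, dotProduct]
          _ ≤ ∑ j, |A i j * v j| := Finset.abs_sum_le_sum_abs _ _
          _ ≤ ∑ j, |A i j| := by
              apply Finset.sum_le_sum
              intro j _
              rw [abs_mul]
              exact mul_le_of_le_one_right (abs_nonneg _) (hvj j)

lemma entry_le_specNorm {N : ℕ} (A : Matrix (Fin N) (Fin N) ℝ) (i j : Fin N) :
    |A i j| ≤ specNorm A := by
  classical
  set e : Fin N → ℝ := fun i' => if i' = j then 1 else 0 with he
  have hnorm : l2norm e = 1 := by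
    rw [l2norm]
    have h1 : ∀ i', e i' ^ 2 = if i' = j then (1:ℝ) else 0 := by
      intro i'; rw [he]; by_cases h : i' = j <;> simp [h]
    rw [Finset.sum_congr rfl (fun i' _ => h1 i')]
    simp
  have hmem : l2norm (A.mulVec e) ∈
      {r : ℝ | ∃ v : Fin N → ℝ, l2norm v = 1 ∧ r = l2norm (A.mulVec v)} :=
    ⟨e, hnorm, rfl⟩
  have hAe : A.mulVec e i = A i j := by
    rw [Matrix.mulVec, dotProduct]
    simp [he, mul_ite]
  calc |A i j| = |A.mulVec e i| := by rw [hAe]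
    _ ≤ l2norm (A.mulVec e) := abs_apply_le_l2norm _ i
    _ ≤ specNorm A := le_csSup (bddAbove_specSet A) hmem

lemma descent {Ω : Type*} [MeasurableSpace Ω] (P : Measure Ω) [IsProbabilityMeasure P]
    {q : ℝ} (hq : 0 ≤ q) {U V : Ω → ℝ} (hU : Measurable U) (hV : Measurable V)
    (hind : IndepFun U V P)
    (hfin : ∫⁻ ω, ENNReal.ofReal (|U ω + V ω| ^ q) ∂P ≠ ∞) :
    ∫⁻ ω, ENNReal.ofReal (|U ω| ^ q) ∂P ≠ ∞ := by
  have hUm : IsProbabilityMeasure (P.map U) := Measure.isProbabilityMeasure_map hU.aemeasurable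
  have hVm : IsProbabilityMeasure (P.map V) := Measure.isProbabilityMeasure_map hV.aemeasurable
  have hphi : Measurable (fun p : ℝ × ℝ => ENNReal.ofReal (|p.1 + p.2| ^ q)) := by fun_prop
  have hprod := (indepFun_iff_map_prod_eq_prod_map_map hU.aemeasurable hV.aemeasurable).mp hind
  have h1 : ∫⁻ ω, ENNReal.ofReal (|U ω + V ω| ^ q) ∂P
      = ∫⁻ p : ℝ × ℝ, ENNReal.ofReal (|p.1 + p.2| ^ q) ∂((P.map U).prod (P.map V)) := by
    rw [← hprod, lintegral_map hphi (hU.prodMk hV)]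
  rw [h1, lintegral_prod_symm _ hphi.aemeasurable] at hfin
  have hinner : Measurable fun y => ∫⁻ x, ENNReal.ofReal (|x + y| ^ q) ∂(P.map U) :=
    Measurable.lintegral_prod_left hphi
  have hae : ∀ᵐ y ∂(P.map V), (∫⁻ x, ENNReal.ofReal (|x + y| ^ q) ∂(P.map U)) < ∞ :=
    ae_lt_top hinner hfin
  have hne : (ae (P.map V)).NeBot := ae_neBot.mpr (IsProbabilityMeasure.ne_zero _)
  obtain ⟨y0, hy0⟩ := hae.exists
  have hptw : ∀ x : ℝ, ENNReal.ofReal (|x| ^ q)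
      ≤ ENNReal.ofReal (2 ^ q) * (ENNReal.ofReal (|x + y0| ^ q) + ENNReal.ofReal (|y0| ^ q)) := by
    intro x
    calc ENNReal.ofReal (|x| ^ q) ≤ ENNReal.ofReal (2 ^ q * (|x + y0| ^ q + |y0| ^ q)) :=
          ENNReal.ofReal_le_ofReal (abs_rpow_le hq)
      _ = ENNReal.ofReal (2 ^ q) * (ENNReal.ofReal (|x + y0| ^ q) + ENNReal.ofReal (|y0| ^ q)) := by
          rw [ENNReal.ofReal_mul (Real.rpow_nonneg (by norm_num) q),
            ENNReal.ofReal_add (Real.rpow_nonneg (abs_nonneg _) q)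
              (Real.rpow_nonneg (abs_nonneg _) q)]
  have hxm : Measurable fun x : ℝ => ENNReal.ofReal (|x + y0| ^ q) := by fun_prop
  have h2 : ∫⁻ x, ENNReal.ofReal (|x| ^ q) ∂(P.map U) ≠ ∞ := by
    have hb : ∫⁻ x, ENNReal.ofReal (|x| ^ q) ∂(P.map U)
        ≤ ENNReal.ofReal (2 ^ q) *
          ((∫⁻ x, ENNReal.ofReal (|x + y0| ^ q) ∂(P.map U)) + ENNReal.ofReal (|y0| ^ q)) := by
      calc ∫⁻ x, ENNReal.ofReal (|x| ^ q) ∂(P.map U)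
          ≤ ∫⁻ x, ENNReal.ofReal (2 ^ q) *
              (ENNReal.ofReal (|x + y0| ^ q) + ENNReal.ofReal (|y0| ^ q)) ∂(P.map U) :=
            lintegral_mono hptw
        _ = ENNReal.ofReal (2 ^ q) *
            ((∫⁻ x, ENNReal.ofReal (|x + y0| ^ q) ∂(P.map U)) + ENNReal.ofReal (|y0| ^ q)) := by
            rw [lintegral_const_mul _ (f := fun x : ℝ => ENNReal.ofReal (|x + y0| ^ q) + ENNReal.ofReal (|y0| ^ q)) (hxm.add measurable_const),
              lintegral_add_right _ measurable_const, lintegral_const]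
            simp [measure_univ]
    refine ne_top_of_le_ne_top ?_ hb
    exact ENNReal.mul_ne_top ENNReal.ofReal_ne_top
      (ENNReal.add_ne_top.mpr ⟨hy0.ne, ENNReal.ofReal_ne_top⟩)
  have h3 : ∫⁻ ω, ENNReal.ofReal (|U ω| ^ q) ∂P
      = ∫⁻ x, ENNReal.ofReal (|x| ^ q) ∂(P.map U) := by
    rw [lintegral_map (by fun_prop) hU]
  rw [h3]; exact h2

lemma tsum_diff {N : ℕ} (B : ℕ → Matrix (Fin N) (Fin N) ℝ) (k : ℕ)
    (ε : ℤ → Fin N → ℝ) (εs : Fin N → ℝ) :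
    ((∑' j : ℕ, (B j).mulVec (ε ((k : ℤ) - j))) -
      (∑' j : ℕ, (B j).mulVec (fun i' => if (k : ℤ) - j = 0 then εs i' else ε ((k : ℤ) - j) i')))
    = if Summable (fun j : ℕ => (B j).mulVec (ε ((k : ℤ) - j)))
        then (B k).mulVec (fun i' => ε 0 i' - εs i') else 0 := by
  classical
  set f : ℕ → Fin N → ℝ := fun j => (B j).mulVec (ε ((k:ℤ) - j)) with hf
  set g : ℕ → Fin N → ℝ :=
    fun j => (B j).mulVec (fun i' => if (k:ℤ) - j = 0 then εs i' else ε ((k:ℤ) - j) i') with hg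
  set h : ℕ → Fin N → ℝ :=
    fun j => if j = k then (B k).mulVec (fun i' => ε 0 i' - εs i') else 0 with hh
  have hgf : ∀ j, g j = f j - h j := by
    intro j
    by_cases hj : j = k
    · subst hj
      have h0 : (j : ℤ) - (j : ℕ) = 0 := by simp
      simp only [hg, hf, hh, if_pos rfl, h0, if_pos, sub_self]
      rw [show (fun i' => ε 0 i' - εs i') = ε 0 - εs from rfl, ← Matrix.mulVec_sub,
        sub_sub_cancel]
    · have hcond : ¬((k:ℤ) - (j:ℕ) = 0) := by omega
      simp only [hg, hf, hh, if_neg hj, if_neg hcond, sub_zero]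
  have hhsum : Summable h :=
    summable_of_ne_finset_zero (s := {k})
      (by intro j hj; simp only [hh]; rw [if_neg (by simpa using hj)])
  by_cases hs : Summable f
  · rw [if_pos hs]
    have hts : ∑' j, g j = (∑' j, f j) - ∑' j, h j := by
      rw [show g = fun j => f j - h j from funext hgf]
      exact Summable.tsum_sub hs hhsum
    rw [hts]
    have hth : ∑' j, h j = (B k).mulVec (fun i' => ε 0 i' - εs i') := by
      rw [tsum_eq_single k (fun j hj => by simp only [hh]; exact if_neg hj)]
      simp only [hh, if_pos rfl]
    rw [hth, sub_sub_cancel]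
  · rw [if_neg hs]
    have hgs : ¬ Summable g := by
      intro hgs'
      apply hs
      have hfg : f = fun j => g j + h j := by
        funext j
        rw [hgf j, sub_add_cancel]
      rw [hfg]
      exact hgs'.add hhsum
    rw [tsum_eq_zero_of_not_summable hs, tsum_eq_zero_of_not_summable hgs, sub_zero]

end GPYAux


open GPYAux

/-- Example A.1.1: functional dependence measure of a
high-dimensional MA(∞) process. -/
theorem statement_12
    {Ω : Type*} [MeasurableSpace Ω]
    (P : MeasureTheory.Measure Ω) [MeasureTheory.IsProbabilityMeasure P]
    (N : ℕ) (hN : 1 ≤ N)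
    (B : ℕ → Matrix (Fin N) (Fin N) ℝ)
    (εv : ℤ → Ω → Fin N → ℝ) (εsv : Ω → Fin N → ℝ)
    (hmeas : ∀ t, Measurable (εv t)) (hmeas' : Measurable εsv)
    -- `{ε_{it}}` together with the copy `ε*_0` is an independent family over `i, t`
    (hindep : ProbabilityTheory.iIndepFun
      (fun (ki : (ℤ ⊕ Unit) × Fin N) (ω : Ω) => Sum.elim εv (fun _ => εsv) ki.1 ω ki.2) P)
    -- `ε*_0` is a copy of `ε_0`
    (hcopy : ∀ i, ProbabilityTheory.IdentDistrib (fun ω => εsv ω i) (fun ω => εv 0 ω i) P P)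
    (hmean : ∀ t i, ∫ ω, εv t ω i ∂P = 0)
    (q : ℝ) (hq : 2 < q)
    (hmom : ∃ K : ℝ, ∀ t i, (∫ ω, |εv t ω i| ^ q ∂P) ≤ K)
    (αe : ℝ) (hαe : 2 < αe)
    (hB : ∃ CB : ℝ, 0 < CB ∧ ∀ j : ℕ, 1 ≤ j → specNorm (B j) ≤ CB * (j : ℝ) ^ (-αe)) :
    ∃ C : ℝ, 0 < C ∧ ∀ k : ℕ, 1 ≤ k →
      lqNorm P q (fun ω => (Real.sqrt N)⁻¹ * ∑ i,
          ((∑' j : ℕ, (B j).mulVec (εv ((k : ℤ) - j) ω)) i -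
            (∑' j : ℕ, (B j).mulVec
              (fun i' => if (k : ℤ) - j = 0 then εsv ω i' else εv ((k : ℤ) - j) ω i')) i)) ≤
        C * (k : ℝ) ^ (-αe) := by
  classical
  obtain ⟨K, hK⟩ := hmom
  obtain ⟨CB, hCB, hBspec⟩ := hB
  have hq0 : (0:ℝ) < q := by linarith
  have hq0' : q ≠ 0 := ne_of_gt hq0
  have hK0 : 0 ≤ K :=
    le_trans (integral_nonneg (fun ω => Real.rpow_nonneg (abs_nonneg _) q)) (hK 0 ⟨0, hN⟩)
  have hN0 : (0:ℝ) < N := by exact_mod_cast hN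
  set D0 : ℝ := (N:ℝ) ^ q * ((N:ℝ) * (2 ^ q * (2 * K))) with hD0def
  have hD00 : 0 ≤ D0 := by positivity
  set C : ℝ := (N:ℝ) * CB * (D0 + 1) ^ (1/q) with hCdef
  have hCpos : 0 < C :=
    mul_pos (mul_pos hN0 hCB) (Real.rpow_pos_of_pos (by linarith) (1/q))
  refine ⟨C, hCpos, ?_⟩
  intro k hk
  have hkpos : (0:ℝ) < (k:ℝ) := by exact_mod_cast hk
  have hkα : (0:ℝ) < (k:ℝ) ^ (-αe) := Real.rpow_pos_of_pos hkpos _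
  set ρ : ℝ := (N:ℝ) * (CB * (k:ℝ) ^ (-αe)) with hρdef
  have hρ0 : 0 ≤ ρ := by positivity
  -- basic objects
  set w : Ω → Fin N → ℝ := fun ω i => εv 0 ω i - εsv ω i with hwdef
  set c : Fin N → ℝ := fun i => (Real.sqrt N)⁻¹ * ∑ i', B k i' i with hcdef
  set Y : Ω → ℝ := fun ω => ∑ i, c i * w ω i with hYdef
  set S : Set Ω := {ω | Summable (fun j : ℕ => (B j).mulVec (εv ((k:ℤ) - j) ω))} with hSdef
  -- the function in the statement is the indicator of S times Y
  have hXeq : ∀ ω, (Real.sqrt N)⁻¹ * ∑ i,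
      ((∑' j : ℕ, (B j).mulVec (εv ((k : ℤ) - j) ω)) i -
        (∑' j : ℕ, (B j).mulVec
          (fun i' => if (k : ℤ) - j = 0 then εsv ω i' else εv ((k : ℤ) - j) ω i')) i)
      = S.indicator Y ω := by
    intro ω
    have hdiff : ((∑' j : ℕ, (B j).mulVec (εv ((k : ℤ) - j) ω)) -
        (∑' j : ℕ, (B j).mulVec
          (fun i' => if (k : ℤ) - j = 0 then εsv ω i' else εv ((k : ℤ) - j) ω i')))
        = if Summable (fun j : ℕ => (B j).mulVec (εv ((k : ℤ) - j) ω))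
            then (B k).mulVec (fun i' => εv 0 ω i' - εsv ω i') else 0 :=
      tsum_diff B k (fun t => εv t ω) (εsv ω)
    have hterm : ∀ i : Fin N,
        (∑' j : ℕ, (B j).mulVec (εv ((k : ℤ) - j) ω)) i -
          (∑' j : ℕ, (B j).mulVec
            (fun i' => if (k : ℤ) - j = 0 then εsv ω i' else εv ((k : ℤ) - j) ω i')) i
        = (if Summable (fun j : ℕ => (B j).mulVec (εv ((k:ℤ) - j) ω))
            then (B k).mulVec (fun i' => εv 0 ω i' - εsv ω i') else 0) i := by
      intro i
      rw [← hdiff]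
      rfl
    rw [Finset.sum_congr rfl (fun i _ => hterm i)]
    by_cases hs : Summable (fun j : ℕ => (B j).mulVec (εv ((k:ℤ) - j) ω))
    · have hmem : ω ∈ S := hs
      rw [Set.indicator_of_mem hmem]
      simp only [if_pos hs]
      calc (Real.sqrt N)⁻¹ * ∑ i, (B k).mulVec (fun i' => εv 0 ω i' - εsv ω i') i
          = (Real.sqrt N)⁻¹ * ∑ i, ∑ i', B k i i' * w ω i' := rfl
        _ = (Real.sqrt N)⁻¹ * ∑ i', ∑ i, B k i i' * w ω i' := by rw [Finset.sum_comm]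
        _ = ∑ i', (Real.sqrt N)⁻¹ * ∑ i, B k i i' * w ω i' := by rw [Finset.mul_sum]
        _ = Y ω := by
            rw [hYdef]
            apply Finset.sum_congr rfl
            intro i' _
            rw [hcdef, ← Finset.sum_mul]
            ring
    · have hmem : ω ∉ S := hs
      rw [Set.indicator_of_notMem hmem]
      simp only [if_neg hs]
      simp
  have hfun : (fun ω => (Real.sqrt N)⁻¹ * ∑ i,
      ((∑' j : ℕ, (B j).mulVec (εv ((k : ℤ) - j) ω)) i -
        (∑' j : ℕ, (B j).mulVec
          (fun i' => if (k : ℤ) - j = 0 then εsv ω i' else εv ((k : ℤ) - j) ω i')) i))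
      = S.indicator Y := funext hXeq
  rw [hfun]
  -- bound on the coefficients c
  have hcρ : ∀ i, |c i| ≤ ρ := by
    intro i
    have hs1 : (1:ℝ) ≤ Real.sqrt N := by
      rw [show (1:ℝ) = Real.sqrt 1 by simp]
      exact Real.sqrt_le_sqrt (by exact_mod_cast hN)
    have hsinv : (Real.sqrt N)⁻¹ ≤ 1 := inv_le_one_of_one_le₀ hs1
    have hsinv0 : (0:ℝ) ≤ (Real.sqrt N)⁻¹ := inv_nonneg.mpr (Real.sqrt_nonneg _)
    have hspec : specNorm (B k) ≤ CB * (k:ℝ) ^ (-αe) := hBspec k hk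
    have hspec0 : 0 ≤ specNorm (B k) := le_trans (abs_nonneg _) (entry_le_specNorm (B k) i i)
    calc |c i| = |(Real.sqrt N)⁻¹| * |∑ i', B k i' i| := by rw [hcdef, abs_mul]
      _ ≤ 1 * ∑ i', |B k i' i| := by
          apply mul_le_mul
          · rwa [abs_of_nonneg hsinv0]
          · exact Finset.abs_sum_le_sum_abs _ _
          · exact abs_nonneg _
          · norm_num
      _ = ∑ i', |B k i' i| := one_mul _
      _ ≤ ∑ _i' : Fin N, specNorm (B k) :=
          Finset.sum_le_sum fun i' _ => entry_le_specNorm (B k) i' i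
      _ = (N:ℝ) * specNorm (B k) := by
          rw [Finset.sum_const, nsmul_eq_mul, Finset.card_univ, Fintype.card_fin]
      _ ≤ (N:ℝ) * (CB * (k:ℝ) ^ (-αe)) :=
          mul_le_mul_of_nonneg_left hspec (le_of_lt hN0)
      _ = ρ := hρdef.symm
  -- the support of c
  set T : Finset (Fin N) := Finset.univ.filter (fun i => c i ≠ 0) with hTdef
  have hYT : ∀ ω, Y ω = ∑ i ∈ T, c i * w ω i := by
    intro ω
    rw [hYdef, hTdef]
    exact (Finset.sum_filter_of_ne (fun i _ h => left_ne_zero_of_mul h)).symm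
  have hTcard : T.card ≤ N := le_trans (Finset.card_filter_le _ _) (by simp)
  -- pointwise domination
  have hptY : ∀ ω, |Y ω| ≤ ρ * ∑ i ∈ T, |w ω i| := by
    intro ω
    calc |Y ω| = |∑ i ∈ T, c i * w ω i| := by rw [hYT]
      _ ≤ ∑ i ∈ T, |c i * w ω i| := Finset.abs_sum_le_sum_abs _ _
      _ = ∑ i ∈ T, |c i| * |w ω i| := by
          exact Finset.sum_congr rfl fun i _ => abs_mul _ _
      _ ≤ ∑ i ∈ T, ρ * |w ω i| :=
          Finset.sum_le_sum fun i _ => mul_le_mul_of_nonneg_right (hcρ i) (abs_nonneg _)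
      _ = ρ * ∑ i ∈ T, |w ω i| := (Finset.mul_sum _ _ _).symm
  have hptInd : ∀ ω, |S.indicator Y ω| ≤ |Y ω| := by
    intro ω
    by_cases hmem : ω ∈ S
    · rw [Set.indicator_of_mem hmem]
    · rw [Set.indicator_of_notMem hmem]
      simp [abs_nonneg]
  have hptX : ∀ ω, |S.indicator Y ω| ^ q
      ≤ ρ ^ q * ((N:ℝ) ^ q * ∑ i ∈ T, 2 ^ q * (|εv 0 ω i| ^ q + |εsv ω i| ^ q)) := by
    intro ω
    have h1 : |S.indicator Y ω| ^ q ≤ (ρ * ∑ i ∈ T, |w ω i|) ^ q :=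
      Real.rpow_le_rpow (abs_nonneg _) (le_trans (hptInd ω) (hptY ω)) hq0.le
    have h2 : (ρ * ∑ i ∈ T, |w ω i|) ^ q = ρ ^ q * (∑ i ∈ T, |w ω i|) ^ q :=
      Real.mul_rpow hρ0 (Finset.sum_nonneg fun i _ => abs_nonneg _)
    have h3 : (∑ i ∈ T, |w ω i|) ^ q ≤ (N:ℝ) ^ q * ∑ i ∈ T, |w ω i| ^ q :=
      sum_rpow_le T _ (fun i _ => abs_nonneg _) hq0 N hTcard
    have h4 : ∀ i, |w ω i| ^ q ≤ 2 ^ q * (|εv 0 ω i| ^ q + |εsv ω i| ^ q) := by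
      intro i
      calc |w ω i| ^ q ≤ (|εv 0 ω i| + |εsv ω i|) ^ q :=
            Real.rpow_le_rpow (abs_nonneg _) (abs_sub _ _) hq0.le
        _ ≤ 2 ^ q * (|εv 0 ω i| ^ q + |εsv ω i| ^ q) :=
            rpow_add_le (abs_nonneg _) (abs_nonneg _) hq0.le
    calc |S.indicator Y ω| ^ q ≤ ρ ^ q * (∑ i ∈ T, |w ω i|) ^ q := by rw [← h2]; exact h1
      _ ≤ ρ ^ q * ((N:ℝ) ^ q * ∑ i ∈ T, |w ω i| ^ q) :=
          mul_le_mul_of_nonneg_left h3 (Real.rpow_nonneg hρ0 q)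
      _ ≤ ρ ^ q * ((N:ℝ) ^ q * ∑ i ∈ T, 2 ^ q * (|εv 0 ω i| ^ q + |εsv ω i| ^ q)) := by
          apply mul_le_mul_of_nonneg_left _ (Real.rpow_nonneg hρ0 q)
          apply mul_le_mul_of_nonneg_left _ (Real.rpow_nonneg (Nat.cast_nonneg N) q)
          exact Finset.sum_le_sum fun i _ => h4 i
  have hidcopy : ∀ i : Fin N, IdentDistrib (fun ω => |εsv ω i| ^ q) (fun ω => |εv 0 ω i| ^ q) P P :=
    fun i => (hcopy i).comp (show Measurable fun x : ℝ => |x| ^ q by fun_prop)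
  -- final packaging lemma, used in both cases
  have hfinal : ∫ ω, |S.indicator Y ω| ^ q ∂P ≤ ρ ^ q * (D0 + 1) →
      lqNorm P q (S.indicator Y) ≤ C * (k:ℝ) ^ (-αe) := by
    intro hint
    have hint0 : 0 ≤ ∫ ω, |S.indicator Y ω| ^ q ∂P :=
      integral_nonneg fun ω => Real.rpow_nonneg (abs_nonneg _) q
    have h5 : lqNorm P q (S.indicator Y) ≤ (ρ ^ q * (D0 + 1)) ^ (1/q) := by
      rw [lqNorm]
      exact Real.rpow_le_rpow hint0 hint (by positivity)
    have h6 : (ρ ^ q * (D0 + 1)) ^ (1/q) = ρ * (D0 + 1) ^ (1/q) := by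
      rw [Real.mul_rpow (Real.rpow_nonneg hρ0 q) (by linarith), ← Real.rpow_mul hρ0,
        mul_one_div_cancel hq0', Real.rpow_one]
    refine le_trans h5 ?_
    rw [h6, hρdef, hCdef]
    ring_nf
    exact le_refl _
  by_cases hA : ∀ i, c i ≠ 0 → Integrable (fun ω => |εv 0 ω i| ^ q) P
  · -- Case A : all relevant innovations are q-integrable
    have hIω : ∀ i ∈ T, Integrable (fun ω => |εv 0 ω i| ^ q) P := by
      intro i hi
      exact hA i (Finset.mem_filter.mp hi).2
    have hIs : ∀ i ∈ T, Integrable (fun ω => |εsv ω i| ^ q) P := by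
      intro i hi
      exact (hidcopy i).integrable_iff.mpr (hIω i hi)
    set gb : Ω → ℝ := fun ω =>
      ρ ^ q * ((N:ℝ) ^ q * ∑ i ∈ T, 2 ^ q * (|εv 0 ω i| ^ q + |εsv ω i| ^ q)) with hgbdef
    have hInt2 : ∀ i ∈ T, Integrable (fun ω => 2 ^ q * (|εv 0 ω i| ^ q + |εsv ω i| ^ q)) P := by
      intro i hi
      exact ((hIω i hi).add (hIs i hi)).const_mul _
    have hgbInt : Integrable gb P := by
      apply Integrable.const_mul
      apply Integrable.const_mul
      exact integrable_finset_sum T hInt2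
    have hle1 : ∫ ω, |S.indicator Y ω| ^ q ∂P ≤ ∫ ω, gb ω ∂P :=
      integral_mono_of_nonneg (ae_of_all _ fun ω => Real.rpow_nonneg (abs_nonneg _) q)
        hgbInt (ae_of_all _ hptX)
    have hle2 : ∫ ω, gb ω ∂P ≤ ρ ^ q * (D0 + 1) := by
      have hgbval : ∫ ω, gb ω ∂P
          = ρ ^ q * ((N:ℝ) ^ q * ∑ i ∈ T,
              2 ^ q * ((∫ ω, |εv 0 ω i| ^ q ∂P) + ∫ ω, |εsv ω i| ^ q ∂P)) := by
        rw [hgbdef]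
        rw [integral_const_mul, integral_const_mul,
          integral_finset_sum T hInt2]
        congr 1
        congr 1
        apply Finset.sum_congr rfl
        intro i hi
        rw [integral_const_mul, integral_add (hIω i hi) (hIs i hi)]
      rw [hgbval]
      have hterm : ∀ i ∈ T,
          2 ^ q * ((∫ ω, |εv 0 ω i| ^ q ∂P) + ∫ ω, |εsv ω i| ^ q ∂P) ≤ 2 ^ q * (2 * K) := by
        intro i hi
        apply mul_le_mul_of_nonneg_left _ (Real.rpow_nonneg (by norm_num) q)
        have he1 : ∫ ω, |εv 0 ω i| ^ q ∂P ≤ K := hK 0 i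
        have he2 : ∫ ω, |εsv ω i| ^ q ∂P ≤ K := by
          rw [(hidcopy i).integral_eq]
          exact hK 0 i
        linarith
      have hsum : ∑ i ∈ T, 2 ^ q * ((∫ ω, |εv 0 ω i| ^ q ∂P) + ∫ ω, |εsv ω i| ^ q ∂P)
          ≤ (N:ℝ) * (2 ^ q * (2 * K)) := by
        calc ∑ i ∈ T, 2 ^ q * ((∫ ω, |εv 0 ω i| ^ q ∂P) + ∫ ω, |εsv ω i| ^ q ∂P)
            ≤ ∑ _i ∈ T, 2 ^ q * (2 * K) := Finset.sum_le_sum hterm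
          _ = (T.card : ℝ) * (2 ^ q * (2 * K)) := by rw [Finset.sum_const, nsmul_eq_mul]
          _ ≤ (N:ℝ) * (2 ^ q * (2 * K)) := by
              apply mul_le_mul_of_nonneg_right _ (by positivity)
              exact_mod_cast hTcard
      calc ρ ^ q * ((N:ℝ) ^ q * ∑ i ∈ T,
              2 ^ q * ((∫ ω, |εv 0 ω i| ^ q ∂P) + ∫ ω, |εsv ω i| ^ q ∂P))
          ≤ ρ ^ q * ((N:ℝ) ^ q * ((N:ℝ) * (2 ^ q * (2 * K)))) := by
            apply mul_le_mul_of_nonneg_left _ (Real.rpow_nonneg hρ0 q)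
            exact mul_le_mul_of_nonneg_left hsum (Real.rpow_nonneg (Nat.cast_nonneg N) q)
        _ = ρ ^ q * D0 := by rw [hD0def]
        _ ≤ ρ ^ q * (D0 + 1) := by
            apply mul_le_mul_of_nonneg_left _ (Real.rpow_nonneg hρ0 q)
            linarith
    exact hfinal (le_trans hle1 hle2)
  · -- Case B : some relevant innovation is not q-integrable; the L^q norm is 0
    push_neg at hA
    obtain ⟨i0, hc0, hnint⟩ := hA
    suffices hzero : ∫ ω, |S.indicator Y ω| ^ q ∂P = 0 by
      apply hfinal
      rw [hzero]
      positivity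
    -- measurability infrastructure
    set F : (ℤ ⊕ Unit) × Fin N → Ω → ℝ :=
      fun ki ω => Sum.elim εv (fun _ => εsv) ki.1 ω ki.2 with hFdef
    have hF : ∀ p, Measurable (F p) := by
      rintro ⟨(t | u), i⟩
      · exact (measurable_pi_apply i).comp (hmeas t)
      · exact (measurable_pi_apply i).comp hmeas'
    set m : (ℤ ⊕ Unit) × Fin N → MeasurableSpace Ω :=
      fun p => MeasurableSpace.comap (F p) inferInstance with hmdef
    have hm_le : ∀ p, m p ≤ ‹MeasurableSpace Ω› := fun p => measurable_iff_comap_le.mp (hF p)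
    set tS : Set ((ℤ ⊕ Unit) × Fin N) := {p | p.1 = Sum.inl 0 ∨ p.1 = Sum.inr ()} with htSdef
    have hIndepM : Indep (⨆ p ∈ tS, m p) (⨆ p ∈ tSᶜ, m p) P := indep_iSup_of_disjoint hm_le hindep disjoint_compl_right
    have hM1le : (⨆ p ∈ tS, m p) ≤ ‹MeasurableSpace Ω› := iSup₂_le fun p _ => hm_le p
    have hM2le : (⨆ p ∈ tSᶜ, m p) ≤ ‹MeasurableSpace Ω› := iSup₂_le fun p _ => hm_le p
    have hFM1 : ∀ p, p ∈ tS → Measurable[⨆ p ∈ tS, m p] (F p) :=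
      fun p hp => Measurable.of_comap_le (le_iSup₂ (f := fun p (_ : p ∈ tS) => m p) p hp)
    have hFM2 : ∀ p, p ∈ tSᶜ → Measurable[⨆ p ∈ tSᶜ, m p] (F p) :=
      fun p hp => Measurable.of_comap_le (le_iSup₂ (f := fun p (_ : p ∈ tSᶜ) => m p) p hp)
    have hYmeasM1 : Measurable[⨆ p ∈ tS, m p] Y := by
      letI : MeasurableSpace Ω := ⨆ p ∈ tS, m p
      apply Finset.measurable_sum
      intro i _
      have h1 : Measurable[⨆ p ∈ tS, m p] (F (Sum.inl 0, i)) := hFM1 _ (Or.inl rfl)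
      have h2 : Measurable[⨆ p ∈ tS, m p] (F (Sum.inr (), i)) := hFM1 _ (Or.inr rfl)
      exact (h1.sub h2).const_mul _
    have hSmeasM2 : MeasurableSet[⨆ p ∈ tSᶜ, m p] S := by
      have hchar : ∀ ω : Ω, ω ∈ S ↔
          ∀ i : Fin N, ∃ M : ℕ, ∀ u : Finset ↥(({k} : Set ℕ)ᶜ),
            ∑ j ∈ u, |(B (j:ℕ)).mulVec (εv ((k:ℤ) - (j:ℕ)) ω) i| ≤ (M:ℝ) := by
        intro ω
        show Summable (fun j : ℕ => (B j).mulVec (εv ((k:ℤ) - j) ω)) ↔ _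
        rw [← Set.Finite.summable_compl_iff (Set.finite_singleton k), Pi.summable]
        exact forall_congr' fun i => summable_iff_nat_bound _
      have hSeq : S = ⋂ i : Fin N, ⋃ M : ℕ, ⋂ u : Finset ↥(({k} : Set ℕ)ᶜ),
          {ω | ∑ j ∈ u, |(B (j:ℕ)).mulVec (εv ((k:ℤ) - (j:ℕ)) ω) i| ≤ (M:ℝ)} := by
        ext ω
        simp only [Set.mem_iInter, Set.mem_iUnion, Set.mem_setOf_eq]
        exact hchar ω
      rw [hSeq]
      apply MeasurableSet.iInter
      intro i
      apply MeasurableSet.iUnion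
      intro M
      apply MeasurableSet.iInter
      intro u
      have hg : Measurable[⨆ p ∈ tSᶜ, m p]
          fun ω => ∑ j ∈ u, |(B (j:ℕ)).mulVec (εv ((k:ℤ) - (j:ℕ)) ω) i| := by
        letI : MeasurableSpace Ω := ⨆ p ∈ tSᶜ, m p
        apply Finset.measurable_sum
        intro j _
        apply Measurable.abs
        show Measurable[⨆ p ∈ tSᶜ, m p] fun ω => ∑ i', B (j:ℕ) i i' * εv ((k:ℤ) - (j:ℕ)) ω i'
        apply Finset.measurable_sum
        intro i' _
        have hp : ((Sum.inl ((k:ℤ) - (j:ℕ)), i') : (ℤ ⊕ Unit) × Fin N) ∈ tSᶜ := by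
          intro hcon
          rcases hcon with h | h
          · have h0 : (k:ℤ) - (j:ℕ) = 0 := Sum.inl_injective h
            have hjk : (j:ℕ) ≠ k := j.2
            omega
          · exact Sum.inl_ne_inr h
        exact (hFM2 _ hp).const_mul _
      exact hg measurableSet_Iic
    have hYm : Measurable Y := hYmeasM1.mono hM1le le_rfl
    have hSm : MeasurableSet S := hM2le _ hSmeasM2
    set G : Ω → ℝ≥0∞ := fun ω => ENNReal.ofReal (|Y ω| ^ q) with hGdef
    set I : Ω → ℝ≥0∞ := S.indicator (fun _ => 1) with hIdef
    have hpt : ∀ ω, ENNReal.ofReal (|S.indicator Y ω| ^ q) = G ω * I ω := by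
      intro ω
      by_cases hmem : ω ∈ S
      · simp only [hIdef, hGdef, Set.indicator_of_mem hmem, mul_one]
      · simp only [hIdef, hGdef, Set.indicator_of_notMem hmem, mul_zero, abs_zero,
          Real.zero_rpow hq0', ENNReal.ofReal_zero]
    have hGmeasM1 : Measurable[⨆ p ∈ tS, m p] G := by
      letI : MeasurableSpace Ω := ⨆ p ∈ tS, m p
      exact ENNReal.measurable_ofReal.comp ((meas_rpow q).comp hYmeasM1.abs)
    have hImeasM2 : Measurable[⨆ p ∈ tSᶜ, m p] I := by
      letI : MeasurableSpace Ω := ⨆ p ∈ tSᶜ, m p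
      exact measurable_const.indicator hSmeasM2
    have hXlint : ∫⁻ ω, ENNReal.ofReal (|S.indicator Y ω| ^ q) ∂P
        = (∫⁻ ω, G ω ∂P) * P S := by
      calc ∫⁻ ω, ENNReal.ofReal (|S.indicator Y ω| ^ q) ∂P = ∫⁻ ω, G ω * I ω ∂P :=
            lintegral_congr hpt
        _ = (∫⁻ ω, G ω ∂P) * ∫⁻ ω, I ω ∂P :=
            lintegral_mul_eq_lintegral_mul_lintegral_of_independent_measurableSpace
              hM1le hM2le hIndepM hGmeasM1 hImeasM2
        _ = (∫⁻ ω, G ω ∂P) * P S := by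
            rw [hIdef, lintegral_indicator_const hSm, one_mul]
    by_cases hPS : P S = 0
    · have hae : ∀ᵐ ω ∂P, ω ∉ S := measure_eq_zero_iff_ae_notMem.mp hPS
      have hae0 : (fun ω => |S.indicator Y ω| ^ q) =ᵐ[P] 0 := by
        filter_upwards [hae] with ω hω
        rw [Set.indicator_of_notMem hω]
        simp [Real.zero_rpow hq0']
      exact integral_eq_zero_of_ae hae0
    · by_cases hGtop : ∫⁻ ω, G ω ∂P = ∞
      · have htop : ∫⁻ ω, ENNReal.ofReal (|S.indicator Y ω| ^ q) ∂P = ∞ := by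
          rw [hXlint, hGtop]
          exact ENNReal.top_mul hPS
        apply integral_undef
        intro hInt
        have hfi := (hasFiniteIntegral_iff_ofReal
          (ae_of_all _ fun ω => Real.rpow_nonneg (abs_nonneg _) q)).mp hInt.hasFiniteIntegral
        rw [htop] at hfi
        exact absurd hfi (lt_irrefl _)
      · -- ∫⁻ G < ∞ : contradiction with the non-integrability of ε_{i0,0}
        exfalso
        apply hnint
        have hi0T : i0 ∈ T := Finset.mem_filter.mpr ⟨Finset.mem_univ _, hc0⟩
        set Te : Finset (Fin N) := T.erase i0 with hTedef
        set S1 : Finset ((ℤ ⊕ Unit) × Fin N) :=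
          {(Sum.inl 0, i0), (Sum.inr (), i0)} with hS1def
        set S2 : Finset ((ℤ ⊕ Unit) × Fin N) :=
          Te.image (fun i => (Sum.inl 0, i)) ∪ Te.image (fun i => (Sum.inr (), i)) with hS2def
        have hm1 : ((Sum.inl 0 : ℤ ⊕ Unit), i0) ∈ S1 := by simp [hS1def]
        have hm2 : ((Sum.inr () : ℤ ⊕ Unit), i0) ∈ S1 := by simp [hS1def]
        have hmA : ∀ i ∈ Te, ((Sum.inl 0 : ℤ ⊕ Unit), i) ∈ S2 :=
          fun i hi => Finset.mem_union_left _ (Finset.mem_image_of_mem _ hi)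
        have hmB : ∀ i ∈ Te, ((Sum.inr () : ℤ ⊕ Unit), i) ∈ S2 :=
          fun i hi => Finset.mem_union_right _ (Finset.mem_image_of_mem _ hi)
        have hdisj : Disjoint S1 S2 := by
          rw [Finset.disjoint_left]
          intro p hp1 hp2
          have h2 : p.2 = i0 := by
            rcases Finset.mem_insert.mp hp1 with h | h
            · rw [h]
            · rw [Finset.mem_singleton.mp h]
          have h3 : p.2 ∈ Te := by
            rcases Finset.mem_union.mp hp2 with h | h <;>
            · obtain ⟨i, hi, hpe⟩ := Finset.mem_image.mp h
              rw [← hpe]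
              exact hi
          exact (Finset.mem_erase.mp h3).1 h2
        have hbase := hindep.indepFun_finset S1 S2 hdisj hF
        set φ1 : (↥S1 → ℝ) → ℝ :=
          fun x => c i0 * (x ⟨(Sum.inl 0, i0), hm1⟩ - x ⟨(Sum.inr (), i0), hm2⟩) with hφ1def
        have hφ1 : Measurable φ1 := by
          rw [hφ1def]
          fun_prop
        set φ2 : (↥S2 → ℝ) → ℝ :=
          fun x => ∑ j ∈ Te.attach, c (j : Fin N) *
            (x ⟨(Sum.inl 0, (j : Fin N)), hmA _ j.2⟩ -
              x ⟨(Sum.inr (), (j : Fin N)), hmB _ j.2⟩) with hφ2def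
        have hφ2 : Measurable φ2 := by
          rw [hφ2def]
          apply Finset.measurable_sum
          intro j _
          fun_prop
        set U : Ω → ℝ := fun ω => c i0 * w ω i0 with hUdef
        set V : Ω → ℝ := fun ω => ∑ i ∈ Te, c i * w ω i with hVdef
        have hUeq : U = φ1 ∘ (fun ω (p : ↥S1) => F (p : (ℤ ⊕ Unit) × Fin N) ω) := rfl
        have hVeq : V = φ2 ∘ (fun ω (p : ↥S2) => F (p : (ℤ ⊕ Unit) × Fin N) ω) := by
          funext ω
          exact (Finset.sum_attach Te fun i => c i * w ω i).symm
        have hUV : IndepFun U V P := by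
          rw [hUeq, hVeq]
          exact hbase.comp hφ1 hφ2
        have hUm : Measurable U :=
          (((measurable_pi_apply i0).comp (hmeas 0)).sub
            ((measurable_pi_apply i0).comp hmeas')).const_mul _
        have hVm : Measurable V := by
          apply Finset.measurable_sum
          intro i _
          exact (((measurable_pi_apply i).comp (hmeas 0)).sub
            ((measurable_pi_apply i).comp hmeas')).const_mul _
        have hYUV : ∀ ω, Y ω = U ω + V ω := by
          intro ω
          rw [hYT ω]
          exact (Finset.add_sum_erase T (fun i => c i * w ω i) hi0T).symm
        have hfin1 : ∫⁻ ω, ENNReal.ofReal (|U ω + V ω| ^ q) ∂P ≠ ∞ := by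
          have heq : (fun ω => ENNReal.ofReal (|U ω + V ω| ^ q)) = G := by
            funext ω
            rw [← hYUV ω]
          rw [heq]
          exact hGtop
        have h4 : ∫⁻ ω, ENNReal.ofReal (|U ω| ^ q) ∂P ≠ ∞ :=
          descent P hq0.le hUm hVm hUV hfin1
        have hwm : Measurable fun ω => ENNReal.ofReal (|w ω i0| ^ q) := by
          apply ENNReal.measurable_ofReal.comp
          apply (meas_rpow q).comp
          exact (((measurable_pi_apply i0).comp (hmeas 0)).sub
            ((measurable_pi_apply i0).comp hmeas')).abs
        have h5 : ∫⁻ ω, ENNReal.ofReal (|w ω i0| ^ q) ∂P ≠ ∞ := by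
          have hUex : ∀ ω, ENNReal.ofReal (|U ω| ^ q)
              = ENNReal.ofReal (|c i0| ^ q) * ENNReal.ofReal (|w ω i0| ^ q) := by
            intro ω
            rw [hUdef]
            show ENNReal.ofReal (|c i0 * w ω i0| ^ q) = _
            rw [abs_mul, Real.mul_rpow (abs_nonneg _) (abs_nonneg _),
              ENNReal.ofReal_mul (Real.rpow_nonneg (abs_nonneg _) q)]
          rw [show (fun ω => ENNReal.ofReal (|U ω| ^ q)) = fun ω =>
              ENNReal.ofReal (|c i0| ^ q) * ENNReal.ofReal (|w ω i0| ^ q) from funext hUex,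
            lintegral_const_mul _ hwm] at h4
          intro hcon
          rw [hcon] at h4
          exact h4 (ENNReal.mul_top
            (ENNReal.ofReal_pos.mpr (Real.rpow_pos_of_pos (abs_pos.mpr hc0) q)).ne')
        set U' : Ω → ℝ := fun ω => εv 0 ω i0 with hU'def
        set V' : Ω → ℝ := fun ω => -εsv ω i0 with hV'def
        have hU'm : Measurable U' := (measurable_pi_apply i0).comp (hmeas 0)
        have hV'm : Measurable V' := ((measurable_pi_apply i0).comp hmeas').neg
        have hindP : IndepFun U' V' P := by
          have hbase2 : IndepFun (F (Sum.inl 0, i0)) (F (Sum.inr (), i0)) P :=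
            hindep.indepFun (by simp)
          exact hbase2.comp measurable_id measurable_neg
        have hfin2 : ∫⁻ ω, ENNReal.ofReal (|U' ω + V' ω| ^ q) ∂P ≠ ∞ := by
          have hwe : ∀ ω, U' ω + V' ω = w ω i0 := by
            intro ω
            show εv 0 ω i0 + -εsv ω i0 = _
            rw [hwdef]
            ring
          rw [show (fun ω => ENNReal.ofReal (|U' ω + V' ω| ^ q))
              = fun ω => ENNReal.ofReal (|w ω i0| ^ q) from
            funext fun ω => by rw [hwe ω]]
          exact h5
        have h6 : ∫⁻ ω, ENNReal.ofReal (|U' ω| ^ q) ∂P ≠ ∞ :=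
          descent P hq0.le hU'm hV'm hindP hfin2
        refine ⟨((meas_rpow q).comp hU'm.abs).aestronglyMeasurable, ?_⟩
        rw [hasFiniteIntegral_iff_ofReal (ae_of_all _ fun ω => Real.rpow_nonneg (abs_nonneg _) q)]
        exact lt_top_iff_ne_top.mpr h6
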